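/- Let n be a positive even integer and q ≤ n. Every GL_n(ℝ)-equivariant map f : (ℙ(ℝⁿ))^{q} → ℝ_ε is identically zero. -/

import Mathlib

open Matrix

noncomputable section

/-- Sign of the determinant of `g` (the character ε of `GL_n(ℝ)`). -/
def eps {n : ℕ} (g : GL (Fin n) ℝ) : ℝ :=
  Real.sign ((g : Matrix (Fin n) (Fin n) ℝ).det)

/-- Action of `GL n ℝ` on the projective space of `ℝⁿ`. -/
def glAct {n : ℕ} (g : GL (Fin n) ℝ) (x : Projectivization ℝ (Fin n → ℝ)) :
    Projectivization ℝ (Fin n → ℝ) :=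
  Projectivization.map (Matrix.mulVecLin (g : Matrix (Fin n) (Fin n) ℝ))
    (fun a b hab => by
      have hab' : (↑g : Matrix (Fin n) (Fin n) ℝ) *ᵥ a = (↑g : Matrix (Fin n) (Fin n) ℝ) *ᵥ b := hab
      have key : ((↑g⁻¹ : Matrix (Fin n) (Fin n) ℝ) * (↑g : Matrix (Fin n) (Fin n) ℝ)) = 1 :=
        Units.inv_mul g
      calc a = 1 *ᵥ a := (Matrix.one_mulVec a).symm
        _ = (↑g⁻¹ : Matrix (Fin n) (Fin n) ℝ) *ᵥ ((↑g : Matrix (Fin n) (Fin n) ℝ) *ᵥ a) := by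
              rw [Matrix.mulVec_mulVec, key]
        _ = (↑g⁻¹ : Matrix (Fin n) (Fin n) ℝ) *ᵥ ((↑g : Matrix (Fin n) (Fin n) ℝ) *ᵥ b) := by
              rw [hab']
        _ = 1 *ᵥ b := by rw [Matrix.mulVec_mulVec, key]
        _ = b := Matrix.one_mulVec b) x

/-- `GL_n(ℝ)`-equivariance with values in the sign module `ℝ_ε`:
`f(g·x_1,…,g·x_q) = ε(g)·f(x_1,…,x_q)`. -/
def PEquivariant {n q : ℕ} (f : (Fin q → Projectivization ℝ (Fin n → ℝ)) → ℝ) : Prop :=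
  ∀ (g : GL (Fin n) ℝ) (x : Fin q → Projectivization ℝ (Fin n → ℝ)),
    f (fun i => glAct g (x i)) = eps g * f x

lemma stmt1_aux {n q : ℕ} (hn : 0 < n) (hq : q ≤ n)
    (x : Fin q → Projectivization ℝ (Fin n → ℝ)) :
    ∃ g : GL (Fin n) ℝ, eps g = -1 ∧
      ∀ i, ∃ a : ℝˣ, Matrix.mulVecLin (g : Matrix (Fin n) (Fin n) ℝ) (x i).rep
        = (a : ℝ) • (x i).rep := by
  classical
  set v : Fin q → (Fin n → ℝ) := fun i => (x i).rep with hv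
  obtain ⟨s, hsub, hspan, hind⟩ := exists_linearIndependent ℝ (Set.range v)
  replace hind : LinearIndepOn ℝ id s := hind
  set t : Set (Fin n → ℝ) := hind.extend (Set.subset_univ s) with ht
  set b : Module.Basis t ℝ (Fin n → ℝ) := Module.Basis.extend hind with hb
  haveI : Fintype ↥t := FiniteDimensional.fintypeBasisIndex b
  have hcoe : ∀ j : t, b j = (j : Fin n → ℝ) := fun j => by rw [hb, Module.Basis.coe_extend]
  have hst : s ⊆ t := hind.subset_extend _
  have hcard : t.ncard = n := by
    have h1 := Module.finrank_eq_card_basis b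
    have h2 : Module.finrank ℝ (Fin n → ℝ) = n := Module.finrank_fin_fun ℝ
    rw [h2] at h1
    rw [Set.ncard_eq_toFinset_card', Set.toFinset_card]
    omega
  -- choose u
  have hu : ∃ u ∈ t, (u ∉ s) ∨ (∀ i, v i ∈ t) := by
    by_cases hts : (t \ s).Nonempty
    · obtain ⟨u, hu1, hu2⟩ := hts
      exact ⟨u, hu1, Or.inl hu2⟩
    · have hts' : t ⊆ s := by
        intro w hw
        by_contra hws
        exact hts ⟨w, hw, hws⟩
      have htr : t ⊆ Set.range v := hts'.trans hsub
      have hrq : (Set.range v).ncard ≤ q := by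
        rw [← Set.image_univ]
        calc (v '' Set.univ).ncard ≤ (Set.univ : Set (Fin q)).ncard := Set.ncard_image_le
          _ = q := by rw [Set.ncard_univ, Nat.card_eq_fintype_card, Fintype.card_fin]
      have heq : t = Set.range v :=
        Set.eq_of_subset_of_ncard_le htr (by omega) (Set.finite_range v)
      have hne : t.Nonempty := Set.nonempty_of_ncard_ne_zero (by omega)
      obtain ⟨u, hu1⟩ := hne
      exact ⟨u, hu1, Or.inr (fun i => heq ▸ Set.mem_range_self i)⟩
  obtain ⟨u, hut, hualt⟩ := hu
  set c : t → ℝ := fun j => if (j : Fin n → ℝ) = u then -1 else 1 with hc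
  have hc2 : ∀ j, c j * c j = 1 := by
    intro j; rw [hc]; dsimp only; split <;> norm_num
  set σ : (Fin n → ℝ) →ₗ[ℝ] (Fin n → ℝ) := b.constr ℝ (fun j => c j • b j) with hσ
  have hσb : ∀ j : t, σ (b j) = c j • b j := fun j => b.constr_basis ℝ _ j
  have hσσ : σ ∘ₗ σ = LinearMap.id := by
    apply b.ext
    intro j
    simp only [LinearMap.comp_apply, hσb, _root_.map_smul, LinearMap.id_apply, smul_smul, hc2,
      one_smul]
  set M : Matrix (Fin n) (Fin n) ℝ := LinearMap.toMatrix' σ with hM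
  have hMM : M * M = 1 := by
    rw [hM, ← LinearMap.toMatrix'_comp, hσσ, LinearMap.toMatrix'_id]
  set g : GL (Fin n) ℝ := ⟨M, M, hMM, hMM⟩ with hg
  have hgM : (g : Matrix (Fin n) (Fin n) ℝ) = M := rfl
  have hdet : M.det = -1 := by
    have hdet1 : M.det = LinearMap.det σ := LinearMap.det_toMatrix' σ
    have hdiag : LinearMap.toMatrix b b σ = Matrix.diagonal c := by
      ext i j
      rw [LinearMap.toMatrix_apply, hσb, _root_.map_smul, Module.Basis.repr_self]
      rcases eq_or_ne i j with rfl | hij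
      · simp [Matrix.diagonal_apply_eq]
      · simp [Matrix.diagonal_apply_ne _ hij, Finsupp.single_apply, Ne.symm hij]
    have hdet2 : LinearMap.det σ = (Matrix.diagonal c).det := by
      rw [← LinearMap.det_toMatrix b, hdiag]
    rw [hdet1, hdet2, Matrix.det_diagonal]
    have : ∀ j : t, c j = if j = (⟨u, hut⟩ : t) then -1 else 1 := by
      intro j; rw [hc]; simp [Subtype.ext_iff]
    rw [Finset.prod_congr rfl (fun j _ => this j), Finset.prod_ite_eq' Finset.univ]
    simp
  refine ⟨g, ?_, ?_⟩
  · show Real.sign ((g : Matrix (Fin n) (Fin n) ℝ).det) = -1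
    rw [hgM, hdet]
    exact Real.sign_of_neg (by norm_num)
  · -- equivariance on lines
    have hmul : Matrix.mulVecLin M = σ := by
      rw [hM, ← Matrix.toLin'_apply', Matrix.toLin'_toMatrix']
    have hmul' : ∀ w, M *ᵥ w = σ w := fun w => LinearMap.congr_fun hmul w
    intro i
    have hσfix : ∀ i, ∃ a : ℝˣ, σ (v i) = (a : ℝ) • v i := by
      intro i
      rcases hualt with hus | hvt
      · -- σ is identity on span s ∋ v i
        have hid : ∀ w ∈ Submodule.span ℝ s, σ w = w := by
          intro w hw
          induction hw using Submodule.span_induction with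
          | mem w hw =>
            have hwt : w ∈ t := hst hw
            have : σ (b ⟨w, hwt⟩) = c ⟨w, hwt⟩ • b ⟨w, hwt⟩ := hσb _
            rw [hcoe] at this
            rw [this, hc]
            have : w ≠ u := fun h => hus (h ▸ hw)
            simp [this]
          | zero => simp
          | add _ _ _ _ h1 h2 => rw [map_add, h1, h2]
          | smul a _ _ h1 => rw [_root_.map_smul, h1]
        have hvs : v i ∈ Submodule.span ℝ s := by
          rw [hspan]
          exact Submodule.subset_span (Set.mem_range_self i)
        exact ⟨1, by simp [hid _ hvs]⟩
      · have hvit := hvt i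
        have : σ (b ⟨v i, hvit⟩) = c ⟨v i, hvit⟩ • b ⟨v i, hvit⟩ := hσb _
        rw [hcoe] at this
        by_cases hviu : v i = u
        · exact ⟨-1, by rw [this, hc]; simp [hviu]⟩
        · exact ⟨1, by rw [this, hc]; simp [hviu]⟩
    obtain ⟨a, ha⟩ := hσfix i
    refine ⟨a, ?_⟩
    show M *ᵥ (x i).rep = _
    rw [hmul']
    exact ha

/-- for `n` positive and even and `q ≤ n`, every `GL_n(ℝ)`-equivariant map
`(ℙ(ℝⁿ))^q → ℝ_ε` is identically zero. -/
theorem stmt1 (n q : ℕ) (hn : 0 < n) (he : Even n) (hq : q ≤ n)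
    (f : (Fin q → Projectivization ℝ (Fin n → ℝ)) → ℝ) (hf : PEquivariant f) :
    f = 0 := by
  funext x
  show f x = 0
  obtain ⟨g, hg, hfix⟩ := stmt1_aux hn hq x
  have heq : (fun i => glAct g (x i)) = x := by
    funext i
    obtain ⟨a, ha⟩ := hfix i
    conv_lhs => rw [← (x i).mk_rep]
    unfold glAct
    erw [Projectivization.map_mk]
    conv_rhs => rw [← (x i).mk_rep]
    rw [Projectivization.mk_eq_mk_iff]
    exact ⟨a, by rw [Units.smul_def, ← ha]⟩
  have hfx := hf g x
  rw [heq, hg] at hfx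
  linarith

end
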